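/- Let D be a bounded open ball in ℝ^N and let Ω_n (n ∈ ℕ) and Ω be nonempty open subsets of D such that: Ω_n converges to Ω in the sense of compact sets; Ω satisfies the Caratheodory property int(cl(Ω)) = Ω; and there is a nonempty compact set K ⊆ cl(D) such that the Hausdorff distance between cl(Ω_n) and K tends to 0 as n → ∞. Then K = cl(Ω). -/

import Mathlib

open Metric Filter Topology

/-- Convergence in the sense of compact sets. -/
def KConv {N : ℕ} (Ω : ℕ → Set (EuclideanSpace ℝ (Fin N)))
    (Ωl : Set (EuclideanSpace ℝ (Fin N))) : Prop :=
  (∀ K : Set (EuclideanSpace ℝ (Fin N)), IsCompact K → K ⊆ Ωl →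
      ∃ N₀ : ℕ, ∀ n ≥ N₀, K ⊆ Ω n) ∧
  (∀ L : Set (EuclideanSpace ℝ (Fin N)), IsCompact L → L ⊆ (closure Ωl)ᶜ →
      ∃ N₀ : ℕ, ∀ n ≥ N₀, L ⊆ (closure (Ω n))ᶜ)

/-- Proposition 2.20 (abstract form): if `Ωₙ` converges to `Ω` in the sense of compact sets,
`Ω` is of Caratheodory type, and `cl(Ωₙ)` converges in Hausdorff distance to a nonempty
compact set `K ⊆ cl(D)`, then `K = cl(Ω)`. -/
theorem stmt_6 {N : ℕ} (x₀ : EuclideanSpace ℝ (Fin N)) (R : ℝ) (hR : 0 < R)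
    (D : Set (EuclideanSpace ℝ (Fin N))) (hD : D = ball x₀ R)
    (Ω : ℕ → Set (EuclideanSpace ℝ (Fin N))) (Ωl : Set (EuclideanSpace ℝ (Fin N)))
    (hopen : ∀ n, IsOpen (Ω n)) (hsub : ∀ n, Ω n ⊆ D) (hne : ∀ n, (Ω n).Nonempty)
    (hlopen : IsOpen Ωl) (hlsub : Ωl ⊆ D) (hlne : Ωl.Nonempty)
    (hKconv : KConv Ω Ωl)
    (hCara : interior (closure Ωl) = Ωl)
    (K : Set (EuclideanSpace ℝ (Fin N)))
    (hKc : IsCompact K) (hKne : K.Nonempty) (hKsub : K ⊆ closure D)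
    (hH : Tendsto (fun n => hausdorffDist (closure (Ω n)) K) atTop (nhds 0)) :
    K = closure Ωl := by
  have hDbdd : Bornology.IsBounded D := by rw [hD]; exact isBounded_ball
  have hbdd : ∀ n, Bornology.IsBounded (closure (Ω n)) := fun n =>
    (hDbdd.subset (hsub n)).closure
  have hcne : ∀ n, (closure (Ω n)).Nonempty := fun n => (hne n).mono subset_closure
  have hedist : ∀ n, EMetric.hausdorffEdist (closure (Ω n)) K ≠ ⊤ := fun n =>
    hausdorffEdist_ne_top_of_nonempty_of_bounded (hcne n) hKne (hbdd n) hKc.isBounded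
  apply Set.Subset.antisymm
  · -- K ⊆ closure Ωl
    intro x hx
    by_contra hxc
    obtain ⟨r, hr, hball⟩ := nhds_basis_closedBall.mem_iff.1
      ((isOpen_compl_iff.2 isClosed_closure).mem_nhds hxc)
    obtain ⟨N₀, hN₀⟩ := hKconv.2 (closedBall x r) (isCompact_closedBall x r) hball
    obtain ⟨n, hn1, hn2⟩ := (((hH.eventually (eventually_lt_nhds hr)).and
      (eventually_ge_atTop N₀)).exists)
    have h1 : infDist x (closure (Ω n)) ≤ hausdorffDist (closure (Ω n)) K := by
      rw [hausdorffDist_comm]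
      exact infDist_le_hausdorffDist_of_mem hx
        (by rw [EMetric.hausdorffEdist_comm]; exact hedist n)
    have h2 : r ≤ infDist x (closure (Ω n)) := by
      by_contra hlt'
      obtain ⟨y, hy, hdy⟩ := (infDist_lt_iff (hcne n)).1 (lt_of_not_ge hlt')
      exact hN₀ n hn2 (mem_closedBall.2 (by rw [dist_comm]; exact hdy.le)) hy
    linarith
  · -- closure Ωl ⊆ K
    suffices h : Ωl ⊆ K by
      exact closure_minimal h hKc.isClosed
    intro x hx
    obtain ⟨N₀, hN₀⟩ := hKconv.1 {x} isCompact_singleton (Set.singleton_subset_iff.2 hx)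
    rw [hKc.isClosed.mem_iff_infDist_zero hKne]
    have hle : ∀ ε > 0, infDist x K < ε := by
      intro ε hε
      obtain ⟨n, hn1, hn2⟩ := (((hH.eventually (eventually_lt_nhds hε)).and
        (eventually_ge_atTop N₀)).exists)
      have hxn : x ∈ closure (Ω n) :=
        subset_closure (hN₀ n hn2 (Set.mem_singleton x))
      calc infDist x K ≤ hausdorffDist (closure (Ω n)) K :=
            infDist_le_hausdorffDist_of_mem hxn (hedist n)
        _ < ε := hn1
    rcases (infDist_nonneg (s := K) (x := x)).eq_or_lt' with h | h
    · exact h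
    · exact absurd (hle _ h) (lt_irrefl _)
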